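/- Let C be a linear [n,k,d] repeated-root cyclic code over F_q (q a power of the prime p) of length n = p^s·n' with gcd(n',p) = 1, whose generator polynomial g satisfies deg g ≥ p^s − 1. Let γ be an element of order n' in an extension field of F_q. Suppose there are integers f, m ≠ 0, δ ≥ 2 and ν ≥ 0 with gcd(n',m) = 1 such that for every codeword c(X) ∈ C and every j ∈ {0, 1, …, ν}, the formal power series Σ_{i=0}^∞ c^{[p^s−1]}(γ^{f+im+j}) X^i is congruent to 0 modulo X^{δ−1}. Then the minimum Hamming distance of C satisfies d ≥ δ + ν. -/

import Mathlib

open Polynomial Matrix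

private lemma digit_decomp (b m i : ℕ) :
    i % (b * m) = i % b + b * (i / b % m) := by
  conv_lhs => rw [← Nat.div_add_mod (i % (b * m)) b]
  rw [Nat.mod_mul_right_div_self, Nat.mod_mod_of_dvd _ ⟨m, rfl⟩, Nat.add_comm]

private lemma pow_pred_div_mod {p : ℕ} (hp : 2 ≤ p) (s : ℕ) :
    (p ^ (s + 1) - 1) % p = p - 1 ∧ (p ^ (s + 1) - 1) / p = p ^ s - 1 := by
  have hA : 1 ≤ p ^ s := Nat.one_le_pow _ _ (by omega)
  have h2 : p * (p ^ s - 1) + p = p * p ^ s := by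
    rw [← Nat.mul_succ]; congr 1; omega
  have e1 : p ^ (s + 1) - 1 = (p - 1) + p * (p ^ s - 1) := by
    rw [pow_succ, Nat.mul_comm]; omega
  constructor
  · rw [e1, Nat.add_mul_mod_self_left, Nat.mod_eq_of_lt (by omega)]
  · rw [e1, Nat.add_mul_div_left _ _ (by omega : 0 < p), Nat.div_eq_of_lt (by omega)]
    omega

private lemma lucas_key {p : ℕ} [hfp : Fact p.Prime] (s : ℕ) : ∀ i : ℕ,
    ((i.choose (p ^ s - 1) : ZMod p)) = if i % p ^ s = p ^ s - 1 then 1 else 0 := by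
  have hp := hfp.out.two_le
  induction s with
  | zero => intro i; simp [Nat.mod_one]
  | succ s ih =>
    intro i
    obtain ⟨hmod, hdiv⟩ := pow_pred_div_mod hp s
    have lucas := (Choose.choose_modEq_choose_mod_mul_choose_div_nat
      (p := p) (n := i) (k := p ^ (s + 1) - 1))
    rw [hmod, hdiv] at lucas
    have hcast : ((i.choose (p ^ (s + 1) - 1) : ZMod p)) =
        (((i % p).choose (p - 1) * ((i / p).choose (p ^ s - 1)) : ℕ) : ZMod p) :=
      (ZMod.natCast_eq_natCast_iff _ _ _).mpr lucas
    rw [hcast]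
    push_cast
    rw [ih]
    have hdig := digit_decomp p (p ^ s) i
    rw [← pow_succ'] at hdig
    have hA : 1 ≤ p ^ s := Nat.one_le_pow _ _ (by omega)
    have h2 : p * (p ^ s - 1) + p = p * p ^ s := by
      rw [← Nat.mul_succ]; congr 1; omega
    have e1 : p ^ (s + 1) - 1 = (p - 1) + p * (p ^ s - 1) := by
      rw [pow_succ, Nat.mul_comm]; omega
    have himp : i % p ^ (s + 1) = p ^ (s + 1) - 1 ↔
        (i % p = p - 1 ∧ i / p % p ^ s = p ^ s - 1) := by
      constructor
      · intro h
        have h1 : i % p < p := Nat.mod_lt _ (by omega)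
        have key : i % p + p * (i / p % p ^ s) = (p - 1) + p * (p ^ s - 1) := by omega
        have d1 : (i % p + p * (i / p % p ^ s)) % p = i % p := by
          rw [Nat.add_mul_mod_self_left, Nat.mod_eq_of_lt h1]
        have d1' : ((p - 1) + p * (p ^ s - 1)) % p = p - 1 := by
          rw [Nat.add_mul_mod_self_left, Nat.mod_eq_of_lt (by omega)]
        have d2 : (i % p + p * (i / p % p ^ s)) / p = i / p % p ^ s := by
          rw [Nat.add_mul_div_left _ _ (by omega : 0 < p), Nat.div_eq_of_lt h1, Nat.zero_add]
        have d2' : ((p - 1) + p * (p ^ s - 1)) / p = p ^ s - 1 := by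
          rw [Nat.add_mul_div_left _ _ (by omega : 0 < p), Nat.div_eq_of_lt (by omega),
            Nat.zero_add]
        refine ⟨?_, ?_⟩
        · rw [← d1, key, d1']
        · rw [← d2, key, d2']
      · rintro ⟨ha, hb⟩
        rw [hdig, ha, hb, e1]
    by_cases hc : i % p ^ (s + 1) = p ^ (s + 1) - 1
    · rw [if_pos hc]
      obtain ⟨ha, hb⟩ := himp.mp hc
      rw [ha, hb, if_pos rfl, Nat.choose_self]
      push_cast; ring
    · rw [if_neg hc]
      rw [himp] at hc
      by_cases hd : i / p % p ^ s = p ^ s - 1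
      · rw [if_pos hd]
        have hne : i % p ≠ p - 1 := fun h => hc ⟨h, hd⟩
        have : (i % p).choose (p - 1) = 0 := by
          apply Nat.choose_eq_zero_of_lt
          have := Nat.mod_lt i (show 0 < p by omega)
          omega
        rw [this]; push_cast; ring
      · rw [if_neg hd]; ring

private lemma ht_core {K : Type*} [Field K] {ι : Type*} [Fintype ι] [DecidableEq ι] [Nonempty ι]
    (a x y : ι → K) (ha : ∀ l, a l ≠ 0) (hx : Function.Injective x)
    (hy : Function.Injective y)
    (δ ν : ℕ) (hδ : 2 ≤ δ)
    (hsum : ∀ j ≤ ν, ∀ i < δ - 1, ∑ l, a l * x l ^ i * y l ^ j = 0) :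
    δ + ν ≤ Fintype.card ι := by
  by_contra hcon
  push_neg at hcon
  set w := Fintype.card ι with hw
  have hw1 : 1 ≤ w := Fintype.card_pos
  set r : ℕ := min (δ - 1) w with hr
  have hr1 : 1 ≤ r := by omega
  have hrw : r ≤ w := by omega
  set J : ℕ := w - r with hJ
  have hJν : J ≤ ν := by omega
  have hJw : J < w := by omega
  -- the linear map given by the Vandermonde-type conditions
  let Φ : (ι → K) →ₗ[K] (Fin r → K) :=
    { toFun := fun u i => ∑ l, u l * x l ^ (i : ℕ)
      map_add' := by
        intro u v; funext i
        simp [add_mul, Finset.sum_add_distrib]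
      map_smul' := by
        intro c u; funext i
        simp [Finset.mul_sum, mul_assoc] }
  -- Φ is surjective via a Vandermonde determinant
  have hsurj : Function.Surjective Φ := by
    obtain ⟨e⟩ : Nonempty (Fin r ↪ ι) :=
      Function.Embedding.nonempty_of_card_le (by simpa using hrw)
    set M : Matrix (Fin r) (Fin r) K := fun i k => x (e k) ^ (i : ℕ) with hM
    have hdet : IsUnit M.det := by
      have : M = (Matrix.vandermonde (fun k => x (e k)))ᵀ := by
        ext i k; simp [hM, Matrix.vandermonde]
      rw [this, Matrix.det_transpose, Matrix.det_vandermonde]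
      rw [isUnit_iff_ne_zero]
      apply Finset.prod_ne_zero_iff.mpr
      intro i _
      apply Finset.prod_ne_zero_iff.mpr
      intro j hj
      rw [Finset.mem_Ioi] at hj
      exact sub_ne_zero_of_ne (fun h => (Fin.ne_of_lt hj).symm (e.injective (hx h)))
    intro t
    refine ⟨fun l => ∑ k, if e k = l then (M⁻¹.mulVec t) k else 0, ?_⟩
    funext i
    show (∑ l, (∑ k, if e k = l then (M⁻¹.mulVec t) k else 0) * x l ^ (i : ℕ)) = t i
    have : ∀ l, (∑ k, if e k = l then (M⁻¹.mulVec t) k else 0) * x l ^ (i : ℕ)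
        = ∑ k, if e k = l then (M⁻¹.mulVec t) k * x (e k) ^ (i : ℕ) else 0 := by
      intro l
      rw [Finset.sum_mul]
      congr 1; funext k
      split_ifs with h
      · rw [h]
      · ring
    rw [Finset.sum_congr rfl (fun l _ => this l), Finset.sum_comm]
    have : ∀ k : Fin r, (∑ l, if e k = l then (M⁻¹.mulVec t) k * x (e k) ^ (i : ℕ) else 0)
        = (M⁻¹.mulVec t) k * x (e k) ^ (i : ℕ) := by
      intro k
      rw [Finset.sum_ite_eq] -- (∑ l, if e k = l then f else 0) = if e k ∈ univ then f else 0
      simp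
    rw [Finset.sum_congr rfl (fun k _ => this k)]
    have : (∑ k, (M⁻¹.mulVec t) k * x (e k) ^ (i : ℕ)) = (M * M⁻¹).mulVec t i := by
      rw [← Matrix.mulVec_mulVec]
      simp [Matrix.mulVec, dotProduct, hM, mul_comm]
    rw [this, Matrix.mul_nonsing_inv _ hdet, Matrix.one_mulVec]
  -- dimension of the kernel
  have hker : Module.finrank K (LinearMap.ker Φ) = J := by
    have := LinearMap.finrank_range_add_finrank_ker Φ
    rw [LinearMap.range_eq_top.mpr hsurj, finrank_top] at this
    simp only [Module.finrank_pi] at this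
    simp only [Fintype.card_fin] at this
    omega
  -- the J+1 independent vectors in the kernel
  have hmem : ∀ j : Fin (J + 1), (fun l => a l * y l ^ (j : ℕ)) ∈ LinearMap.ker Φ := by
    intro j
    rw [LinearMap.mem_ker]
    funext i
    show (∑ l, (a l * y l ^ (j : ℕ)) * x l ^ (i : ℕ)) = 0
    rw [← hsum (j : ℕ) (by omega) (i : ℕ) (by omega)]
    congr 1; funext l; ring
  set v : Fin (J + 1) → LinearMap.ker Φ := fun j => ⟨_, hmem j⟩ with hv
  have hindep : LinearIndependent K v := by
    apply LinearIndependent.of_comp (LinearMap.ker Φ).subtype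
    rw [Fintype.linearIndependent_iff]
    intro g hg j
    set q : K[X] := ∑ j' : Fin (J + 1), C (g j') * X ^ (j' : ℕ) with hq
    have hdeg : q.natDegree < w := by
      apply lt_of_le_of_lt (Polynomial.natDegree_sum_le _ _)
      apply Finset.sup_lt_iff (by exact_mod_cast hw1) |>.mpr
      intro j' _
      apply lt_of_le_of_lt (Polynomial.natDegree_C_mul_X_pow_le _ _)
      omega
    have heval : ∀ l, q.eval (y l) = 0 := by
      intro l
      have h0 : (∑ j' : Fin (J + 1), g j' • ((LinearMap.ker Φ).subtype ∘ v) j') l = 0 := by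
        rw [hg]; rfl
      have h1 : a l * (∑ j' : Fin (J + 1), g j' * y l ^ (j' : ℕ)) = 0 := by
        rw [Finset.mul_sum, ← h0]
        simp only [Function.comp_apply, Finset.sum_apply, Pi.smul_apply, smul_eq_mul, hv,
          Submodule.coe_subtype]
        congr 1; funext j'; ring
      have h2 : (∑ j' : Fin (J + 1), g j' * y l ^ (j' : ℕ)) = 0 :=
        (mul_eq_zero.mp h1).resolve_left (ha l)
      rw [hq]
      simp only [eval_finset_sum, eval_mul, eval_C, eval_pow, eval_X]
      exact h2
    have hq0 : q = 0 :=
      Polynomial.eq_zero_of_natDegree_lt_card_of_eval_eq_zero q hy heval (by omega)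
    have := congrArg (fun q => Polynomial.coeff q (j : ℕ)) hq0
    simp only [hq, Polynomial.finset_sum_coeff, Polynomial.coeff_C_mul,
      Polynomial.coeff_X_pow, Polynomial.coeff_zero, mul_ite, mul_one, mul_zero] at this
    rw [Finset.sum_eq_single j] at this
    · simpa using this
    · intro j' _ hne
      rw [if_neg (fun h => hne (Fin.ext (by omega)))]
    · simp
  have := hindep.fintype_card_le_finrank
  rw [hker, Fintype.card_fin] at this
  omega



private lemma units_coe_zpow_pow {K : Type*} [DivisionRing K] (β : Kˣ) (a : ℤ) (i : ℕ) :
    (((β ^ a : Kˣ) : K)) ^ i = ((β ^ (a * (i : ℤ)) : Kˣ) : K) := by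
  rw [← Units.val_pow_eq_pow_val, ← zpow_natCast (β ^ a) i, ← _root_.zpow_mul]

private lemma units_coe_zpow_mul {K : Type*} [DivisionRing K] (β : Kˣ) (a b : ℤ) :
    (((β ^ a : Kˣ) : K)) * ((β ^ b : Kˣ) : K) = ((β ^ (a + b) : Kˣ) : K) := by
  rw [← Units.val_mul, ← _root_.zpow_add]


private lemma units_pow_inj_of_order {K : Type*} [Field K] (β : Kˣ) (n' : ℕ)
    (hβord : orderOf β = n') (m : ℤ) (hmn' : Int.gcd (n' : ℤ) m = 1)
    {l l' : ℕ} (hl : l < n') (hl' : l' < n')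
    (h : ((β ^ (m * (l : ℤ)) : Kˣ) : K) = ((β ^ (m * (l' : ℤ)) : Kˣ) : K)) : l = l' := by
  have h1 : β ^ (m * (l : ℤ)) = β ^ (m * (l' : ℤ)) := Units.ext h
  have h2 : β ^ (m * ((l : ℤ) - (l' : ℤ))) = 1 := by
    rw [mul_sub, _root_.zpow_sub, h1, mul_inv_cancel]
  have h3 : ((orderOf β : ℤ)) ∣ m * ((l : ℤ) - (l' : ℤ)) :=
    orderOf_dvd_iff_zpow_eq_one.mpr h2
  rw [hβord] at h3
  have h4 : (n' : ℤ) ∣ ((l : ℤ) - (l' : ℤ)) :=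
    Int.dvd_of_dvd_mul_left_of_gcd_one (by rwa [mul_comm] at h3) hmn'
  have h5 : (l : ℤ) - l' = 0 := by
    refine Int.eq_zero_of_abs_lt_dvd h4 ?_
    rw [abs_lt]; constructor <;> [push_cast; push_cast] <;> omega
  omega

/-- **Bound II (HT-like bound for repeated-root cyclic codes).**
With the setup of the BCH-like bound, suppose that for every codeword `c` of the
repeated-root cyclic code `C` and for every `j ∈ {0, …, ν}` the first `δ - 1`
coefficients of the power series `Σ_i c^{[p^s-1]}(γ^{f+im+j}) X^i` vanish.  Then the
minimum Hamming distance of `C` is at least `δ + ν`. -/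
theorem repeatedRoot_HT_bound
    {F K : Type*} [Field F] [Fintype F] [Field K] [Algebra F K]
    (p t s n' : ℕ) (hp : p.Prime) (hq : Fintype.card F = p ^ t) (ht : 0 < t)
    (hn'p : Nat.Coprime n' p)
    (g : F[X]) (hg_monic : g.Monic) (hg_dvd : g ∣ X ^ (p ^ s * n') - 1)
    (hg_deg : p ^ s - 1 ≤ g.natDegree)
    (γ : Kˣ) (hγ : orderOf γ = n')
    (f m : ℤ) (hm : m ≠ 0) (hmn' : Int.gcd (n' : ℤ) m = 1)
    (δ ν : ℕ) (hδ : 2 ≤ δ)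
    (hzero : ∀ c : F[X], c.degree < ((p ^ s * n' : ℕ) : WithBot ℕ) → g ∣ c →
      ∀ j ≤ ν, ∀ i < δ - 1,
        aeval ((γ ^ (f + (i : ℤ) * m + (j : ℤ)) : Kˣ) : K)
          (hasseDeriv (p ^ s - 1) c) = 0) :
    ∀ c : F[X], c.degree < ((p ^ s * n' : ℕ) : WithBot ℕ) → g ∣ c → c ≠ 0 →
      δ + ν ≤ c.support.card := by
  intro c hcdeg hcdvd hc0
  classical
  -- numerology
  have hppos : 0 < p := hp.pos
  have hps : 0 < p ^ s := Nat.pow_pos hppos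
  have hn' : 0 < n' := by
    rcases Nat.eq_zero_or_pos n' with h | h
    · exfalso
      rw [h] at hn'p
      have := Nat.coprime_zero_left p |>.mp hn'p
      have := hp.one_lt; omega
    · exact h
  have hnpos : 0 < p ^ s * n' := Nat.mul_pos hps hn'
  have hk0 : p ^ s - 1 < p ^ s * n' := by
    have : p ^ s * 1 ≤ p ^ s * n' := Nat.mul_le_mul_left _ hn'
    omega
  -- characteristic of F is p
  haveI hfp : Fact p.Prime := ⟨hp⟩
  haveI hcharF : CharP F p := by
    obtain ⟨p', hp'⟩ := CharP.exists F
    haveI := hp'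
    have hp'prime : p'.Prime := CharP.char_is_prime F p'
    obtain ⟨n₀, -, hcard⟩ := FiniteField.card F p'
    have hpp' : p = p' := by
      have h1 : p ∣ p' ^ (n₀ : ℕ) := by
        rw [← hcard, hq]; exact dvd_pow_self p (by omega)
      exact (Nat.prime_dvd_prime_iff_eq hp hp'prime).mp (hp.dvd_of_dvd_pow h1)
    rwa [hpp']
  -- binomial coefficient values in F (Lucas)
  have hbin1 : ∀ r : ℕ, (((p ^ s - 1 + p ^ s * r).choose (p ^ s - 1) : ℕ) : F) = 1 := by
    intro r
    have h := lucas_key (p := p) s (p ^ s - 1 + p ^ s * r)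
    rw [if_pos (by rw [Nat.add_mul_mod_self_left, Nat.mod_eq_of_lt (by omega)])] at h
    have h2 := congrArg (ZMod.castHom (dvd_refl p) F) h
    rw [map_natCast] at h2; rwa [_root_.map_one] at h2

  have hbin0 : ∀ i : ℕ, i % p ^ s ≠ p ^ s - 1 → ((i.choose (p ^ s - 1) : ℕ) : F) = 0 := by
    intro i hi
    have h := lucas_key (p := p) s i
    rw [if_neg hi] at h
    have h2 := congrArg (ZMod.castHom (dvd_refl p) F) h
    rw [map_natCast] at h2; rwa [_root_.map_zero] at h2

  -- the cyclic shift c' of c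
  have hcdeg' : c.natDegree < p ^ s * n' := (Polynomial.natDegree_lt_iff_degree_lt hc0).mpr hcdeg
  set i0 : ℕ := c.natDegree with hi0def
  have hi0 : c.coeff i0 ≠ 0 := by
    rw [hi0def, Polynomial.coeff_natDegree]
    exact Polynomial.leadingCoeff_ne_zero.mpr hc0
  set k : ℕ := p ^ s * n' + (p ^ s - 1) - i0 with hkdef
  set σ : ℕ → ℕ := fun i => (i + k) % (p ^ s * n') with hσdef
  have hsupp_lt : ∀ i ∈ c.support, i < p ^ s * n' := fun i hi =>
    lt_of_le_of_lt (le_natDegree_of_mem_supp i hi) hcdeg'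
  have hσinj : ∀ i < p ^ s * n', ∀ i' < p ^ s * n', σ i = σ i' → i = i' := by
    intro i hi i' hi' h
    have h2 : i ≡ i' [MOD p ^ s * n'] := Nat.ModEq.add_right_cancel' k h
    rwa [Nat.ModEq, Nat.mod_eq_of_lt hi, Nat.mod_eq_of_lt hi'] at h2
  set c' : F[X] := ∑ i ∈ c.support, (Polynomial.monomial (σ i)) (c.coeff i) with hc'def
  have hc'coeff : ∀ i1 ∈ c.support, c'.coeff (σ i1) = c.coeff i1 := by
    intro i1 h1
    rw [hc'def, Polynomial.finset_sum_coeff, Finset.sum_eq_single i1]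
    · simp [Polynomial.coeff_monomial]
    · intro i hi hne
      rw [Polynomial.coeff_monomial, if_neg]
      exact fun h => hne (hσinj _ (hsupp_lt _ hi) _ (hsupp_lt _ h1) h)
    · intro h; exact absurd h1 h
  have hc'supp : c'.support ⊆ c.support.image σ := by
    intro j hj
    rw [Polynomial.mem_support_iff] at hj
    by_contra hns
    apply hj
    rw [hc'def, Polynomial.finset_sum_coeff]
    apply Finset.sum_eq_zero
    intro i hi
    rw [Polynomial.coeff_monomial, if_neg]
    exact fun h => hns (Finset.mem_image.mpr ⟨i, hi, h⟩)
  have hc'deg : c'.degree < ((p ^ s * n' : ℕ) : WithBot ℕ) := by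
    rw [hc'def]
    apply lt_of_le_of_lt (Polynomial.degree_sum_le _ _)
    rw [Finset.sup_lt_iff (by exact_mod_cast WithBot.bot_lt_coe (p ^ s * n'))]
    intro i _
    apply lt_of_le_of_lt (Polynomial.degree_monomial_le _ _)
    exact_mod_cast Nat.mod_lt _ hnpos
  -- g divides c'
  have hdvdXn : ∀ a : ℕ, (X : F[X]) ^ (p ^ s * n') - 1 ∣ X ^ a - X ^ (a % (p ^ s * n')) := by
    intro a
    have h1 : (X : F[X]) ^ a
        = X ^ (a % (p ^ s * n')) * ((X ^ (p ^ s * n')) ^ (a / (p ^ s * n'))) := by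
      rw [← pow_mul, ← pow_add]
      congr 1
      exact (Nat.mod_add_div a (p ^ s * n')).symm
    have h2 : (X : F[X]) ^ (p ^ s * n') - 1 ∣ (X ^ (p ^ s * n')) ^ (a / (p ^ s * n')) - 1 := by
      simpa using sub_dvd_pow_sub_pow ((X : F[X]) ^ (p ^ s * n')) 1 (a / (p ^ s * n'))
    have h3 : (X : F[X]) ^ a - X ^ (a % (p ^ s * n'))
        = X ^ (a % (p ^ s * n')) * ((X ^ (p ^ s * n')) ^ (a / (p ^ s * n')) - 1) := by
      rw [mul_sub, mul_one, ← h1]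
    rw [h3]
    exact Dvd.dvd.mul_left h2 _
  have hdvd2 : (X : F[X]) ^ (p ^ s * n') - 1 ∣ X ^ k * c - c' := by
    have hxc : (X : F[X]) ^ k * c = ∑ i ∈ c.support, (Polynomial.monomial (i + k)) (c.coeff i) := by
      conv_lhs => rw [c.as_sum_support]
      rw [Finset.mul_sum]
      refine Finset.sum_congr rfl fun i _ => ?_
      rw [Polynomial.X_pow_eq_monomial, Polynomial.monomial_mul_monomial, one_mul, add_comm]
    rw [hxc, hc'def, ← Finset.sum_sub_distrib]
    apply Finset.dvd_sum
    intro i _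
    have : (Polynomial.monomial (i + k)) (c.coeff i) - (Polynomial.monomial (σ i)) (c.coeff i)
        = C (c.coeff i) * (X ^ (i + k) - X ^ ((i + k) % (p ^ s * n'))) := by
      rw [mul_sub, Polynomial.C_mul_X_pow_eq_monomial, Polynomial.C_mul_X_pow_eq_monomial, hσdef]
    rw [this]
    exact Dvd.dvd.mul_left (hdvdXn (i + k)) _
  have hgc' : g ∣ c' := by
    have h1 : g ∣ X ^ k * c := hcdvd.mul_left _
    have h2 : g ∣ X ^ k * c - c' := (hg_dvd.trans hdvd2)
    simpa using dvd_sub h1 h2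
  -- the simple-root polynomial u
  set u : F[X] := ∑ r ∈ Finset.range n', (Polynomial.monomial r) (c'.coeff (p ^ s - 1 + p ^ s * r))
    with hudef
  have hucoeff : ∀ r < n', u.coeff r = c'.coeff (p ^ s - 1 + p ^ s * r) := by
    intro r hr
    rw [hudef, Polynomial.finset_sum_coeff, Finset.sum_eq_single r]
    · simp [Polynomial.coeff_monomial]
    · intro b _ hne; rw [Polynomial.coeff_monomial, if_neg hne]
    · intro h; exact absurd (Finset.mem_range.mpr hr) h
  have husupp : u.support ⊆ Finset.range n' := by
    intro r hr
    rw [Polynomial.mem_support_iff] at hr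
    by_contra hns
    apply hr
    rw [hudef, Polynomial.finset_sum_coeff]
    apply Finset.sum_eq_zero
    intro b hb
    rw [Polynomial.coeff_monomial, if_neg]
    exact fun h => hns (h ▸ hb)
  have hσi0 : σ i0 = p ^ s - 1 := by
    have hi0lt : i0 < p ^ s * n' := hcdeg'
    have h1 : i0 + k = p ^ s * n' + (p ^ s - 1) := by omega
    show (i0 + k) % (p ^ s * n') = p ^ s - 1
    rw [h1, Nat.add_mod_left]
    exact Nat.mod_eq_of_lt hk0
  have hu0coeff : u.coeff 0 = c.coeff i0 := by
    have h1 : u.coeff 0 = c'.coeff (p ^ s - 1 + p ^ s * 0) := hucoeff 0 hn'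
    rw [h1]
    have h2 : p ^ s - 1 + p ^ s * 0 = σ i0 := by rw [hσi0]; omega
    rw [h2]
    exact hc'coeff i0 (Polynomial.mem_support_iff.mpr hi0)
  have hu0 : u ≠ 0 := fun h => hi0 (by rw [← hu0coeff, h, Polynomial.coeff_zero])
  have hudeg : u.natDegree < n' :=
    Finset.mem_range.mp (husupp (Polynomial.natDegree_mem_support_of_nonzero hu0))
  have hc'0 : c' ≠ 0 := by
    intro h
    apply hi0
    rw [← hc'coeff i0 (Polynomial.mem_support_iff.mpr hi0), h, Polynomial.coeff_zero]
  have hc'ndeg : c'.natDegree < p ^ s * n' := (Polynomial.natDegree_lt_iff_degree_lt hc'0).mpr hc'deg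
  -- β and the key evaluation identity
  set β : Kˣ := γ ^ (p ^ s) with hβdef
  have hβord : orderOf β = n' := by
    rw [hβdef, orderOf_pow' γ hps.ne', hγ,
      Nat.Coprime.gcd_eq_one (hn'p.pow_right s), Nat.div_one]
  have hkey : ∀ e : ℤ, (aeval ((γ ^ e : Kˣ) : K)) (hasseDeriv (p ^ s - 1) c')
      = (aeval ((β ^ e : Kˣ) : K)) u := by
    intro e
    set z : K := ((γ ^ e : Kˣ) : K) with hz
    have hβz : ((β ^ e : Kˣ) : K) = z ^ (p ^ s) := by
      rw [hβdef, ← zpow_natCast γ (p ^ s), ← _root_.zpow_mul, mul_comm, _root_.zpow_mul,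
        zpow_natCast, Units.val_pow_eq_pow_val]
    have hdeg1 : (hasseDeriv (p ^ s - 1) c').natDegree < p ^ s * n' :=
      lt_of_le_of_lt (le_trans (Polynomial.natDegree_hasseDeriv_le _ _) (Nat.sub_le _ _)) hc'ndeg
    have hL : (aeval z) (hasseDeriv (p ^ s - 1) c') = ∑ i ∈ Finset.range (p ^ s * n'),
        (((i + (p ^ s - 1)).choose (p ^ s - 1) : ℕ) * c'.coeff (i + (p ^ s - 1)) : F) • z ^ i := by
      rw [Polynomial.aeval_eq_sum_range' hdeg1]
      refine Finset.sum_congr rfl fun i _ => ?_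
      rw [Polynomial.hasseDeriv_coeff]
    have hR : (aeval ((β ^ e : Kˣ) : K)) u = ∑ r ∈ Finset.range n',
        c'.coeff (p ^ s - 1 + p ^ s * r) • z ^ (p ^ s * r) := by
      rw [Polynomial.aeval_eq_sum_range' hudeg]
      refine Finset.sum_congr rfl fun r hr => ?_
      rw [hucoeff r (Finset.mem_range.mp hr), hβz, ← pow_mul]
    rw [hL, hR]
    have himg : ∑ r ∈ Finset.range n', c'.coeff (p ^ s - 1 + p ^ s * r) • z ^ (p ^ s * r)
        = ∑ i ∈ (Finset.range n').image (fun r => p ^ s * r),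
          (((i + (p ^ s - 1)).choose (p ^ s - 1) : ℕ) * c'.coeff (i + (p ^ s - 1)) : F) • z ^ i := by
      rw [Finset.sum_image (by intro a _ b _ h; exact Nat.eq_of_mul_eq_mul_left hps h)]
      refine Finset.sum_congr rfl fun r _ => ?_
      have h1 : p ^ s * r + (p ^ s - 1) = p ^ s - 1 + p ^ s * r := by omega
      rw [h1, hbin1 r, one_mul]
    rw [himg]
    refine (Finset.sum_subset ?_ ?_).symm
    · intro j hj
      obtain ⟨r, hr, rfl⟩ := Finset.mem_image.mp hj
      rw [Finset.mem_range] at hr ⊢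
      exact mul_lt_mul_of_pos_left hr hps
    · intro i hii hni
      have hmod : (i + (p ^ s - 1)) % p ^ s ≠ p ^ s - 1 := by
        intro hcontra
        have h2 : i + (p ^ s - 1) ≡ 0 + (p ^ s - 1) [MOD p ^ s] := by
          rw [Nat.ModEq, hcontra, Nat.zero_add, Nat.mod_eq_of_lt (by omega)]
        have h3 : i ≡ 0 [MOD p ^ s] := Nat.ModEq.add_right_cancel' _ h2
        have h4 : p ^ s ∣ i := (Nat.modEq_zero_iff_dvd).mp h3
        obtain ⟨r, rfl⟩ := h4
        rw [Finset.mem_range] at hii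
        exact hni (Finset.mem_image.mpr ⟨r, Finset.mem_range.mpr
          (lt_of_mul_lt_mul_left hii (Nat.zero_le _)), rfl⟩)
      rw [hbin0 _ hmod, zero_mul, zero_smul]
  -- the vanishing conditions for u
  have huzero : ∀ j ≤ ν, ∀ i < δ - 1,
      (aeval ((β ^ (f + (i : ℤ) * m + (j : ℤ)) : Kˣ) : K)) u = 0 := by
    intro j hj i hi
    rw [← hkey]
    exact hzero c' hc'deg hgc' j hj i hi
  -- apply the HT core lemma
  haveI hne : Nonempty {l // l ∈ u.support} :=
    ⟨⟨u.natDegree, Polynomial.natDegree_mem_support_of_nonzero hu0⟩⟩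
  have hsuppn' : ∀ l ∈ u.support, l < n' := fun l hl => Finset.mem_range.mp (husupp hl)
  set a : {l // l ∈ u.support} → K :=
    fun l => algebraMap F K (u.coeff l) * ((β ^ (f * ((l : ℕ) : ℤ)) : Kˣ) : K) with hadef
  set x : {l // l ∈ u.support} → K := fun l => ((β ^ (m * ((l : ℕ) : ℤ)) : Kˣ) : K) with hxdef
  set y : {l // l ∈ u.support} → K := fun l => ((β ^ (1 * ((l : ℕ) : ℤ)) : Kˣ) : K) with hydef
  have ha : ∀ l, a l ≠ 0 := by
    intro l
    apply mul_ne_zero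
    · exact (map_ne_zero_iff _ (algebraMap F K).injective).mpr
        (Polynomial.mem_support_iff.mp l.2)
    · exact Units.ne_zero _
  have hx : Function.Injective x := by
    intro l l' h
    exact Subtype.ext (units_pow_inj_of_order β n' hβord m hmn'
      (hsuppn' _ l.2) (hsuppn' _ l'.2) h)
  have hy : Function.Injective y := by
    intro l l' h
    exact Subtype.ext (units_pow_inj_of_order β n' hβord 1 (by simp [Int.gcd]) 
      (hsuppn' _ l.2) (hsuppn' _ l'.2) h)
  have hsum : ∀ j ≤ ν, ∀ i < δ - 1, ∑ l, a l * x l ^ i * y l ^ j = 0 := by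
    intro j hj i hi
    have h0 := huzero j hj i hi
    rw [Polynomial.aeval_def, Polynomial.eval₂_eq_sum, Polynomial.sum_def] at h0
    rw [← h0, ← Finset.sum_coe_sort u.support 
      (fun l => algebraMap F K (u.coeff l) * ((β ^ (f + (i:ℤ) * m + (j:ℤ)) : Kˣ) : K) ^ l)]
    refine Finset.sum_congr rfl fun l _ => ?_
    rw [hadef, hxdef, hydef]
    simp only []
    rw [units_coe_zpow_pow, units_coe_zpow_pow, units_coe_zpow_pow, mul_assoc, mul_assoc,
      units_coe_zpow_mul, units_coe_zpow_mul]
    congr 2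
    ring
  have hfinal := ht_core a x y ha hx hy δ ν hδ hsum
  rw [Fintype.card_coe] at hfinal
  -- weight chain
  have h1 : u.support.card ≤ c'.support.card := by
    apply Finset.card_le_card_of_injOn (fun r => p ^ s - 1 + p ^ s * r)
    · intro r hr
      show p ^ s - 1 + p ^ s * r ∈ c'.support
      rw [Polynomial.mem_support_iff]
      rw [← hucoeff r (hsuppn' r hr)]
      exact Polynomial.mem_support_iff.mp hr
    · intro r _ r' _ h
      exact Nat.eq_of_mul_eq_mul_left hps (Nat.add_left_cancel h)
  have h2 : c'.support.card ≤ c.support.card :=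
    le_trans (Finset.card_le_card hc'supp) Finset.card_image_le
  omega
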